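/- If d divides a_i for all i ≠ j and gcd(d, a_j) = 1, then the d-th truncation satisfies k_a[x_0,...,x_n]^{(d)} = k[x_0,...,x_j^d,...,x_n] with weights (a_0/d, ..., a_j, ..., a_n/d), and hence ℙ(a_0,...,a_n) ≅ ℙ(a_0/d,...,a_j,...,a_n/d). -/

import Mathlib

open MvPolynomial

/-- The scaling equivalence on `𝔸^{n+1} ∖ {0}` defining weighted projective space:
`y ~ x` iff `y i = λ ^ (a i) * x i` for some unit `λ`. -/
def wpsRel {k : Type*} [Field k] {n : ℕ} (a : Fin (n + 1) → ℕ)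
    (x y : {v : Fin (n + 1) → k // v ≠ 0}) : Prop :=
  ∃ l : kˣ, ∀ i, y.1 i = (l : k) ^ a i * x.1 i

/-- Weighted projective space `ℙ(a_0, …, a_n)` as the quotient of
`𝔸^{n+1} ∖ {0}` by the weighted scaling action. -/
def WPS (k : Type*) [Field k] {n : ℕ} (a : Fin (n + 1) → ℕ) :=
  Quot (wpsRel (k := k) a)

lemma wpsRel_equiv {k : Type*} [Field k] {n : ℕ} (a : Fin (n + 1) → ℕ) :
    Equivalence (wpsRel (k := k) a) := by
  constructor
  · intro x; exact ⟨1, fun i => by simp⟩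
  · rintro x y ⟨l, h⟩
    refine ⟨l⁻¹, fun i => ?_⟩
    rw [h i]
    field_simp
    rw [mul_assoc, ← mul_pow, Units.inv_mul, one_pow, mul_one]
  · rintro x y z ⟨l, h⟩ ⟨l', h'⟩
    refine ⟨l' * l, fun i => ?_⟩
    rw [h' i, h i]
    push_cast
    ring

theorem truncation_coprime_weight
    {k : Type*} [Field k] [IsAlgClosed k] {n : ℕ}
    (a : Fin (n + 1) → ℕ) (ha : ∀ i, 0 < a i) (d : ℕ) (hd : 0 < d)
    (j : Fin (n + 1)) (hdvd : ∀ i, i ≠ j → d ∣ a i) (hcop : Nat.gcd d (a j) = 1) :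
    (∀ (m : ℕ) (f : MvPolynomial (Fin (n + 1)) k),
      f.IsWeightedHomogeneous a (d * m) ↔
        ∀ e ∈ f.support, d ∣ e j ∧
          (∑ i : Fin (n + 1),
            if i = j then a j * (e i / d) else (a i / d) * e i) = m) ∧
    Nonempty (WPS k a ≃ WPS k (fun i => if i = j then a j else a i / d)) := by
  constructor
  · -- Part 1: characterization of weighted homogeneous polynomials
    intro m f
    have key : ∀ e : Fin (n + 1) →₀ ℕ,
        Finsupp.weight a e = d * m ↔ (d ∣ e j ∧
          (∑ i : Fin (n + 1),
            if i = j then a j * (e i / d) else (a i / d) * e i) = m) := by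
      intro e
      have hw : Finsupp.weight a e = ∑ i : Fin (n + 1), e i * a i := by
        rw [Finsupp.weight_apply, Finsupp.sum_fintype]
        · rfl
        · intro i; simp
      have heq : d ∣ e j → ∑ i : Fin (n + 1), e i * a i =
          d * ∑ i : Fin (n + 1),
            (if i = j then a j * (e i / d) else (a i / d) * e i) := by
        intro hej
        rw [Finset.mul_sum]
        refine Finset.sum_congr rfl fun i _ => ?_
        by_cases hij : i = j
        · rw [if_pos hij, hij]
          obtain ⟨c, hc⟩ := hej
          rw [hc, Nat.mul_div_cancel_left _ hd]
          ring
        · rw [if_neg hij]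
          obtain ⟨c, hc⟩ := hdvd i hij
          rw [hc, Nat.mul_div_cancel_left _ hd]
          ring
      constructor
      · intro h
        have hrest : d ∣ ∑ i ∈ Finset.univ.erase j, e i * a i :=
          Finset.dvd_sum fun i hi =>
            Dvd.dvd.mul_left (hdvd i (Finset.mem_erase.mp hi).1) (e i)
        have hsplit : e j * a j + ∑ i ∈ Finset.univ.erase j, e i * a i =
            ∑ i : Fin (n + 1), e i * a i :=
          Finset.add_sum_erase Finset.univ (fun i => e i * a i) (Finset.mem_univ j)
        have htot : d ∣ e j * a j + ∑ i ∈ Finset.univ.erase j, e i * a i := by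
          rw [hsplit, ← hw, h]; exact ⟨m, rfl⟩
        have hdj : d ∣ e j * a j := by
          have := Nat.dvd_sub htot hrest
          simpa using this
        have hej : d ∣ e j := Nat.Coprime.dvd_of_dvd_mul_right hcop hdj
        refine ⟨hej, ?_⟩
        rw [hw, heq hej] at h
        exact Nat.eq_of_mul_eq_mul_left hd h
      · rintro ⟨hej, hsum⟩
        rw [hw, heq hej, hsum]
    constructor
    · intro hf e he
      exact (key e).mp (hf (mem_support_iff.mp he))
    · intro h c hc
      exact (key c).mpr (h c (mem_support_iff.mpr hc))
  · -- Part 2: the isomorphism of weighted projective spaces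
    set b : Fin (n + 1) → ℕ := fun i => if i = j then a j else a i / d with hbdef
    have hφne : ∀ x : {v : Fin (n + 1) → k // v ≠ 0},
        (fun i => if i = j then x.1 j ^ d else x.1 i) ≠ (0 : Fin (n + 1) → k) := by
      rintro ⟨x, hx⟩ h0
      apply hx
      funext i
      have hi := congrFun h0 i
      simp only [Pi.zero_apply] at hi ⊢
      by_cases hij : i = j
      · rw [if_pos hij] at hi
        rw [hij]
        exact pow_eq_zero_iff hd.ne' |>.mp hi
      · rwa [if_neg hij] at hi
    let φ : {v : Fin (n + 1) → k // v ≠ 0} → {v : Fin (n + 1) → k // v ≠ 0} :=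
      fun x => ⟨fun i => if i = j then x.1 j ^ d else x.1 i, hφne x⟩
    have hφrel : ∀ x y, wpsRel a x y → wpsRel b (φ x) (φ y) := by
      rintro x y ⟨l, h⟩
      refine ⟨l ^ d, fun i => ?_⟩
      by_cases hij : i = j
      · simp only [φ, hbdef, if_pos hij]
        rw [h j]
        push_cast
        ring
      · simp only [φ, hbdef, if_neg hij]
        rw [h i]
        push_cast
        congr 1
        rw [← pow_mul, Nat.mul_div_cancel' (hdvd i hij)]
    let Φ : WPS k a → WPS k b :=
      Quot.lift (fun x => Quot.mk (wpsRel b) (φ x))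
        (fun x y hxy => Quot.sound (hφrel x y hxy))
    have hinj : Function.Injective Φ := by
      intro p q
      induction p using Quot.inductionOn with
      | h x =>
      induction q using Quot.inductionOn with
      | h y =>
      intro h
      obtain ⟨μ, hμ⟩ : wpsRel b (φ x) (φ y) :=
        ((wpsRel_equiv b).eqvGen_iff).mp (Quot.eqvGen_exact h)
      apply Quot.sound
      have hμj : y.1 j ^ d = (μ : k) ^ a j * x.1 j ^ d := by
        have := hμ j
        simpa [φ, hbdef] using this
      have hμi : ∀ i, i ≠ j → y.1 i = (μ : k) ^ (a i / d) * x.1 i := by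
        intro i hij
        have := hμ i
        simpa [φ, hbdef, if_neg hij] using this
      by_cases hxj : x.1 j = 0
      · -- then y j = 0 as well
        have hyj : y.1 j = 0 := by
          have : y.1 j ^ d = 0 := by rw [hμj, hxj, zero_pow hd.ne', mul_zero]
          exact pow_eq_zero_iff hd.ne' |>.mp this
        obtain ⟨c, hc⟩ := IsAlgClosed.exists_pow_nat_eq (μ : k) hd
        have hc0 : c ≠ 0 := by
          intro h0
          rw [h0, zero_pow hd.ne'] at hc
          exact μ.ne_zero hc.symm
        refine ⟨Units.mk0 c hc0, fun i => ?_⟩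
        by_cases hij : i = j
        · rw [hij, hxj, hyj, mul_zero]
        · rw [hμi i hij]
          congr 1
          simp only [Units.val_mk0]
          conv_rhs => rw [show a i = d * (a i / d) from
            (Nat.mul_div_cancel' (hdvd i hij)).symm]
          rw [pow_mul, hc]
      · -- x j ≠ 0 : use Bezout to build the scaling unit
        have hyj0 : y.1 j ≠ 0 := by
          intro h0
          have h1 : (μ : k) ^ a j * x.1 j ^ d = 0 := by
            rw [← hμj, h0, zero_pow hd.ne']
          rcases mul_eq_zero.mp h1 with h2 | h2
          · exact pow_ne_zero _ μ.ne_zero h2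
          · exact pow_ne_zero _ hxj h2
        set ν : kˣ := Units.mk0 (y.1 j) hyj0 * (Units.mk0 (x.1 j) hxj)⁻¹ with hνdef
        have hνd : ν ^ (d : ℤ) = μ ^ ((a j : ℕ) : ℤ) := by
          ext
          push_cast [hνdef]
          field_simp
          simp only [Units.val_mk0, zpow_natCast, div_pow]
          rw [hμj, mul_div_cancel_right₀ _ (pow_ne_zero _ hxj)]
        set s : ℤ := Nat.gcdA d (a j) with hs
        set t : ℤ := Nat.gcdB d (a j) with ht
        have hbez : (d : ℤ) * s + ((a j : ℕ) : ℤ) * t = 1 := by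
          have := Nat.gcd_eq_gcd_ab d (a j)
          rw [hcop] at this
          push_cast at this
          linarith
        set lam : kˣ := μ ^ s * ν ^ t with hlam
        have hexp : ∀ A : ℤ, lam ^ A = (μ ^ A) ^ s * (ν ^ A) ^ t := by
          intro A
          rw [hlam, mul_zpow, ← zpow_mul, ← zpow_mul, mul_comm s A, mul_comm t A,
            zpow_mul, zpow_mul]
        have hlamd : lam ^ (d : ℤ) = μ := by
          rw [hexp, hνd, ← zpow_mul, ← zpow_mul, ← zpow_add, hbez, zpow_one]
        have hlamaj : lam ^ ((a j : ℕ) : ℤ) = ν := by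
          rw [hexp, ← hνd, ← zpow_mul, ← zpow_mul, ← zpow_add, mul_comm (d : ℤ) s,
            mul_comm ((a j : ℕ) : ℤ) t, mul_comm s (d : ℤ), mul_comm t ((a j : ℕ) : ℤ),
            hbez, zpow_one]
        refine ⟨lam, fun i => ?_⟩
        by_cases hij : i = j
        · have hlj : (lam : k) ^ a j = (ν : k) := by
            have h1 := congrArg Units.val hlamaj
            rw [zpow_natCast] at h1
            simpa using h1
          rw [hij, hlj, hνdef]
          push_cast
          try field_simp
          rw [Units.val_mk0, Units.val_mk0, mul_div_assoc, div_self hxj, mul_one]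
        · rw [hμi i hij]
          congr 1
          have h1 : lam ^ ((a i : ℕ) : ℤ) = μ ^ ((a i / d : ℕ) : ℤ) := by
            conv_lhs => rw [show ((a i : ℕ) : ℤ) = (d : ℤ) * ((a i / d : ℕ) : ℤ) by
              exact_mod_cast congrArg (Nat.cast (R := ℤ))
                (Nat.mul_div_cancel' (hdvd i hij)).symm]
            rw [zpow_mul, hlamd]
          rw [zpow_natCast, zpow_natCast] at h1
          exact_mod_cast (congrArg Units.val h1).symm
    have hsurj : Function.Surjective Φ := by
      intro q
      induction q using Quot.inductionOn with
      | h y =>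
      obtain ⟨r, hr⟩ := IsAlgClosed.exists_pow_nat_eq (y.1 j) hd
      have hxne : (fun i => if i = j then r else y.1 i) ≠ (0 : Fin (n + 1) → k) := by
        intro h0
        apply y.2
        funext i
        have hi := congrFun h0 i
        simp only [Pi.zero_apply] at hi ⊢
        by_cases hij : i = j
        · rw [if_pos hij] at hi
          rw [hij, ← hr, hi, zero_pow hd.ne']
        · rwa [if_neg hij] at hi
      refine ⟨Quot.mk _ ⟨fun i => if i = j then r else y.1 i, hxne⟩, ?_⟩
      show Quot.mk (wpsRel b) _ = _
      refine congrArg (Quot.mk (wpsRel b)) (Subtype.ext (funext fun i => ?_))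
      by_cases hij : i = j
      · show (if i = j then (if j = j then r else y.1 j) ^ d else _) = y.1 i
        rw [if_pos hij, if_pos rfl, hr, hij]
      · show (if i = j then (if j = j then r else y.1 j) ^ d
            else (if i = j then r else y.1 i)) = y.1 i
        rw [if_neg hij, if_neg hij]
    exact ⟨Equiv.ofBijective Φ ⟨hinj, hsurj⟩⟩
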